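/- arXiv:2401.06472 — 2 statements merged into one kernel-verified Lean document; each statement's English description precedes it below -/
import Mathlib

section
/- (Theorem 1, ≤ direction for two sequential projective measurements) Let ρ be a density operator on finite-dimensional H_S with purification |ψ_SE⟩ ∈ H_S ⊗ H_E, and let {Π₁^{b₁}}, {Π₂^{b₂}} be projective measurements on H_S. For any POVM {Π_E^{(b₁,b₂)}} on H_E, Σ_{b₁,b₂} ⟨ψ_SE| (Π₁^{b₁}Π₂^{b₂}Π₁^{b₁}) ⊗ Π_E^{(b₁,b₂)} |ψ_SE⟩ ≤ max over ensemble decompositions ρ = Σ_λ p(λ)|φ_λ⟩⟨φ_λ| of Σ_λ p(λ) max_{b₁,b₂} ⟨φ_λ|Π₁^{b₁}Π₂^{b₂}Π₁^{b₁}|φ_λ⟩. -/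
open Matrix Kronecker
open scoped ComplexOrder

lemma core_sum {dS dE : ℕ} (ψ : Fin dS × Fin dE → ℂ) (B Q : Matrix (Fin dE) (Fin dE) ℂ)
    (hQ : ∀ k k', ∑ m, Q k m * star (Q k' m) = B k k') (i j : Fin dS) :
    ∑ m, (star (∑ k, ψ (i, k) * star (Q k m))) * (∑ k', ψ (j, k') * star (Q k' m))
      = ∑ k, ∑ k', star (ψ (i, k)) * B k k' * ψ (j, k') := by
  have hstar : ∀ m, (star (∑ k, ψ (i, k) * star (Q k m)))
      = ∑ k, star (ψ (i, k)) * Q k m := by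
    intro m
    simp [star_sum, star_mul', star_star]
  calc ∑ m, (star (∑ k, ψ (i, k) * star (Q k m))) * (∑ k', ψ (j, k') * star (Q k' m))
      = ∑ m, ∑ k, ∑ k', (star (ψ (i, k)) * Q k m) * (ψ (j, k') * star (Q k' m)) := by
        refine Finset.sum_congr rfl fun m _ => ?_
        rw [hstar, Finset.sum_mul_sum]
    _ = ∑ k, ∑ k', ∑ m, (star (ψ (i, k)) * Q k m) * (ψ (j, k') * star (Q k' m)) := by
        rw [Finset.sum_comm]
        exact Finset.sum_congr rfl fun k _ => by rw [Finset.sum_comm]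
    _ = ∑ k, ∑ k', star (ψ (i, k)) * B k k' * ψ (j, k') := by
        refine Finset.sum_congr rfl fun k _ => Finset.sum_congr rfl fun k' _ => ?_
        rw [← hQ k k', Finset.mul_sum, Finset.sum_mul]
        exact Finset.sum_congr rfl fun m _ => by ring

lemma swap4 {n n' : Type*} [Fintype n] [Fintype n'] (a : n → ℂ) (c : n' → ℂ)
    (B : n' → n' → ℂ) (d : n → n' → ℂ) :
    ∑ j, a j * (∑ k, ∑ k', c k * B k k' * d j k')
      = ∑ k, c k * (∑ j, ∑ k', a j * B k k' * d j k') := by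
  simp only [Finset.mul_sum]
  rw [Finset.sum_comm]
  exact Finset.sum_congr rfl fun k _ => Finset.sum_congr rfl fun j _ =>
    Finset.sum_congr rfl fun k' _ => by ring

lemma key_dot {dS dE : ℕ} (ψ : Fin dS × Fin dE → ℂ) (A : Matrix (Fin dS) (Fin dS) ℂ)
    (B Q : Matrix (Fin dE) (Fin dE) ℂ)
    (hQ : ∀ k k', ∑ m, Q k m * star (Q k' m) = B k k') :
    ∑ m, star (fun i => ∑ k, ψ (i, k) * star (Q k m)) ⬝ᵥ
        (A *ᵥ (fun i => ∑ k, ψ (i, k) * star (Q k m)))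
      = star ψ ⬝ᵥ ((A ⊗ₖ B) *ᵥ ψ) := by
  have expand : ∀ m, star (fun i => ∑ k, ψ (i, k) * star (Q k m)) ⬝ᵥ
        (A *ᵥ (fun i => ∑ k, ψ (i, k) * star (Q k m)))
      = ∑ i, ∑ j, A i j *
          ((star (∑ k, ψ (i, k) * star (Q k m))) * (∑ k', ψ (j, k') * star (Q k' m))) := by
    intro m
    simp only [dotProduct, mulVec, Pi.star_apply]
    refine Finset.sum_congr rfl fun i _ => ?_
    rw [Finset.mul_sum]
    exact Finset.sum_congr rfl fun j _ => by ring
  calc ∑ m, star (fun i => ∑ k, ψ (i, k) * star (Q k m)) ⬝ᵥ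
        (A *ᵥ (fun i => ∑ k, ψ (i, k) * star (Q k m)))
      = ∑ m, ∑ i, ∑ j, A i j *
          ((star (∑ k, ψ (i, k) * star (Q k m))) * (∑ k', ψ (j, k') * star (Q k' m))) :=
        Finset.sum_congr rfl fun m _ => expand m
    _ = ∑ i, ∑ j, A i j * ∑ m,
          ((star (∑ k, ψ (i, k) * star (Q k m))) * (∑ k', ψ (j, k') * star (Q k' m))) := by
        rw [Finset.sum_comm]
        refine Finset.sum_congr rfl fun i _ => ?_
        rw [Finset.sum_comm]
        exact Finset.sum_congr rfl fun j _ => (Finset.mul_sum _ _ _).symm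
    _ = ∑ i, ∑ j, A i j * (∑ k, ∑ k', star (ψ (i, k)) * B k k' * ψ (j, k')) :=
        Finset.sum_congr rfl fun i _ => Finset.sum_congr rfl fun j _ => by
          rw [core_sum ψ B Q hQ i j]
    _ = star ψ ⬝ᵥ ((A ⊗ₖ B) *ᵥ ψ) := by
        simp only [dotProduct, mulVec, kroneckerMap_apply, Fintype.sum_prod_type, Pi.star_apply]
        refine Finset.sum_congr rfl fun i _ => ?_
        rw [swap4 (fun j => A i j) (fun k => star (ψ (i, k))) B (fun j k' => ψ (j, k'))]

lemma dot_sum_mulVec {n : Type*} [Fintype n] {ι : Type*} [Fintype ι]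
    (v : n → ℂ) (M : ι → Matrix n n ℂ) (w : n → ℂ) :
    ∑ b : ι, v ⬝ᵥ (M b *ᵥ w) = v ⬝ᵥ ((∑ b : ι, M b) *ᵥ w) := by
  simp only [dotProduct, mulVec, Matrix.sum_apply, Finset.sum_mul, Finset.mul_sum]
  rw [Finset.sum_comm]
  exact Finset.sum_congr rfl fun i _ => by rw [Finset.sum_comm]

/-- Partial trace over the second (environment) tensor factor. -/
noncomputable def ptraceE {dS dE : ℕ}
    (M : Matrix (Fin dS × Fin dE) (Fin dS × Fin dE) ℂ) : Matrix (Fin dS) (Fin dS) ℂ :=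
  fun i j => ∑ k, M (i, k) (j, k)

/-- Theorem 1, ≤ direction, two sequential projective measurements:
for any POVM {Π_E^{(b₁,b₂)}} on H_E, Eve's quantum guessing probability
Σ_{b₁,b₂} ⟨ψ_SE|(Π₁^{b₁}Π₂^{b₂}Π₁^{b₁}) ⊗ Π_E^{(b₁,b₂)}|ψ_SE⟩ is at most the
classical guessing probability for some pure-state ensemble decomposition of ρ. -/
theorem stmt5 (dS dE k₁ k₂ : ℕ) (hk₁ : 0 < k₁) (hk₂ : 0 < k₂)
    (ρ : Matrix (Fin dS) (Fin dS) ℂ)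
    (ψSE : Fin dS × Fin dE → ℂ) (hunit : star ψSE ⬝ᵥ ψSE = 1)
    (hpur : ptraceE (vecMulVec ψSE (star ψSE)) = ρ)
    (P1 : Fin k₁ → Matrix (Fin dS) (Fin dS) ℂ)
    (P2 : Fin k₂ → Matrix (Fin dS) (Fin dS) ℂ)
    (h1herm : ∀ b, (P1 b).IsHermitian) (h1idem : ∀ b, P1 b * P1 b = P1 b)
    (h1orth : ∀ b b', b ≠ b' → P1 b * P1 b' = 0) (h1sum : ∑ b, P1 b = 1)
    (h2herm : ∀ b, (P2 b).IsHermitian) (h2idem : ∀ b, P2 b * P2 b = P2 b)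
    (h2orth : ∀ b b', b ≠ b' → P2 b * P2 b' = 0) (h2sum : ∑ b, P2 b = 1)
    (PE : Fin k₁ × Fin k₂ → Matrix (Fin dE) (Fin dE) ℂ)
    (hPEpos : ∀ b, (PE b).PosSemidef) (hPEsum : ∑ b, PE b = 1) :
    ∃ (L : ℕ) (p : Fin L → ℝ) (φ : Fin L → Fin dS → ℂ),
      (∀ l, 0 ≤ p l) ∧ (∑ l, p l = 1) ∧ (∀ l, star (φ l) ⬝ᵥ φ l = 1) ∧
      ρ = ∑ l, (p l : ℂ) • vecMulVec (φ l) (star (φ l)) ∧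
      (∑ b : Fin k₁ × Fin k₂,
          star ψSE ⬝ᵥ (((P1 b.1 * P2 b.2 * P1 b.1) ⊗ₖ PE b) *ᵥ ψSE)).re
        ≤ ∑ l, p l * Finset.univ.sup'
            (Finset.univ_nonempty_iff.mpr ⟨(⟨0, hk₁⟩, ⟨0, hk₂⟩)⟩)
            (fun b : Fin k₁ × Fin k₂ =>
              (star (φ l) ⬝ᵥ ((P1 b.1 * P2 b.2 * P1 b.1) *ᵥ φ l)).re) := by
  classical
  -- dS is nonempty
  have hne : Nonempty (Fin dS) := by
    by_contra h
    rw [not_nonempty_iff] at h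
    have : star ψSE ⬝ᵥ ψSE = 0 := by
      haveI : IsEmpty (Fin dS × Fin dE) := by exact Prod.isEmpty_left
      simp [dotProduct]
    rw [this] at hunit
    exact zero_ne_one hunit
  obtain ⟨i0⟩ := hne
  -- square roots of the POVM elements
  open scoped MatrixOrder in
  set Q : (Fin k₁ × Fin k₂) → Matrix (Fin dE) (Fin dE) ℂ := fun b => CFC.sqrt (PE b) with hQdef
  have hQ : ∀ b k k', ∑ m, Q b k m * star (Q b k' m) = PE b k k' := by
    intro b k k'
    have h2 : (Q b).IsHermitian := by
      open scoped MatrixOrder in exact (CFC.sqrt_nonneg (PE b)).posSemidef.1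
    calc ∑ m, Q b k m * star (Q b k' m) = ∑ m, Q b k m * Q b m k' := by
          exact Finset.sum_congr rfl fun m _ => by rw [h2.apply m k']
      _ = (Q b * Q b) k k' := (Matrix.mul_apply).symm
      _ = PE b k k' := by
        open scoped MatrixOrder in
        rw [show Q b * Q b = PE b from CFC.sqrt_mul_sqrt_self (PE b) (hPEpos b).nonneg]
  -- the sub-normalized conditional states
  set φr : (Fin k₁ × Fin k₂) × Fin dE → Fin dS → ℂ :=
    fun x i => ∑ k, ψSE (i, k) * star (Q x.1 k x.2) with hφrdef
  set pr : (Fin k₁ × Fin k₂) × Fin dE → ℝ :=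
    fun x => ∑ i, Complex.normSq (φr x i) with hprdef
  have hpr0 : ∀ x, 0 ≤ pr x := fun x => Finset.sum_nonneg fun i _ => Complex.normSq_nonneg _
  have hdot : ∀ x, star (φr x) ⬝ᵥ φr x = (pr x : ℂ) := by
    intro x
    simp only [dotProduct, Pi.star_apply, hprdef, Complex.ofReal_sum]
    exact Finset.sum_congr rfl fun i _ => (Complex.normSq_eq_conj_mul_self).symm ▸ rfl
  have hzero : ∀ x, pr x = 0 → φr x = 0 := by
    intro x h
    funext i
    have := (Finset.sum_eq_zero_iff_of_nonneg
      (fun i _ => Complex.normSq_nonneg (φr x i))).1 h i (Finset.mem_univ i)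
    exact Complex.normSq_eq_zero.1 this
  -- the normalized states
  set φn : (Fin k₁ × Fin k₂) × Fin dE → Fin dS → ℂ :=
    fun x => if pr x = 0 then Pi.single i0 1
      else ((Real.sqrt (pr x) : ℝ) : ℂ)⁻¹ • φr x with hφndef
  have hsqrt_ne : ∀ x, pr x ≠ 0 → ((Real.sqrt (pr x) : ℝ) : ℂ) ≠ 0 := by
    intro x h
    simp only [ne_eq, Complex.ofReal_eq_zero]
    exact Real.sqrt_ne_zero'.2 (lt_of_le_of_ne (hpr0 x) (Ne.symm h))
  have hrecover : ∀ x, pr x ≠ 0 → φr x = ((Real.sqrt (pr x) : ℝ) : ℂ) • φn x := by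
    intro x h
    simp only [hφndef, if_neg h, smul_smul, mul_inv_cancel₀ (hsqrt_ne x h), one_smul]
  have hsq : ∀ x, ((Real.sqrt (pr x) : ℝ) : ℂ) * ((Real.sqrt (pr x) : ℝ) : ℂ) = (pr x : ℂ) := by
    intro x
    rw [← Complex.ofReal_mul, Real.mul_self_sqrt (hpr0 x)]
  -- normalization
  have hnorm : ∀ x, star (φn x) ⬝ᵥ φn x = 1 := by
    intro x
    by_cases h : pr x = 0
    · simp only [hφndef, if_pos h]
      simp [dotProduct, Pi.single_apply, apply_ite]
    · simp only [hφndef, if_neg h]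
      rw [star_smul, smul_dotProduct, dotProduct_smul, hdot x]
      have hc : star (((Real.sqrt (pr x) : ℝ) : ℂ)⁻¹) = ((Real.sqrt (pr x) : ℝ) : ℂ)⁻¹ := by
        rw [RCLike.star_def, map_inv₀, Complex.conj_ofReal]
      rw [hc, smul_eq_mul, smul_eq_mul, ← hsq x]
      field_simp
      exact div_self (hsqrt_ne x h)
  -- density matrix decomposition, raw
  have hρraw : ∑ x : (Fin k₁ × Fin k₂) × Fin dE, vecMulVec (φr x) (star (φr x)) = ρ := by
    rw [← hpur]
    ext i j
    simp only [Matrix.sum_apply, vecMulVec_apply, Pi.star_apply, ptraceE]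
    have h1 : ∀ b : Fin k₁ × Fin k₂,
        ∑ m, star (φr (b, m) i) * φr (b, m) j
          = ∑ k, ∑ k', star (ψSE (i, k)) * PE b k k' * ψSE (j, k') :=
      fun b => core_sum ψSE (PE b) (Q b) (hQ b) i j
    calc ∑ x : (Fin k₁ × Fin k₂) × Fin dE, φr x i * star (φr x j)
        = star (∑ b : Fin k₁ × Fin k₂, ∑ m, star (φr (b, m) i) * φr (b, m) j) := by
          simp only [star_sum, star_mul', star_star, Fintype.sum_prod_type]
      _ = star (∑ b : Fin k₁ × Fin k₂, ∑ k, ∑ k',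
            star (ψSE (i, k)) * PE b k k' * ψSE (j, k')) := by
          rw [Finset.sum_congr rfl fun b _ => h1 b]
      _ = star (∑ k, ∑ k', star (ψSE (i, k)) * (∑ b, PE b) k k' * ψSE (j, k')) := by
          congr 1
          rw [Finset.sum_comm]
          refine Finset.sum_congr rfl fun k _ => ?_
          rw [Finset.sum_comm]
          refine Finset.sum_congr rfl fun k' _ => ?_
          rw [Matrix.sum_apply, Finset.mul_sum, Finset.sum_mul]
      _ = star (∑ k, star (ψSE (i, k)) * ψSE (j, k)) := by
          rw [hPEsum]
          congr 1
          refine Finset.sum_congr rfl fun k _ => ?_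
          simp [Matrix.one_apply]
      _ = ∑ k, vecMulVec ψSE (star ψSE) (i, k) (j, k) := by
          simp [star_sum, star_mul', star_star, vecMulVec_apply, mul_comm]
  -- total probability one
  have hsum1 : ∑ x : (Fin k₁ × Fin k₂) × Fin dE, pr x = 1 := by
    have hone : ∑ b : Fin k₁ × Fin k₂,
        ((1 : Matrix (Fin dS) (Fin dS) ℂ) ⊗ₖ PE b) = 1 := by
      ext ⟨i, k⟩ ⟨j, k'⟩
      simp only [Matrix.sum_apply, kroneckerMap_apply]
      rw [show ∑ b : Fin k₁ × Fin k₂,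
          (1 : Matrix (Fin dS) (Fin dS) ℂ) i j * PE b k k'
            = (1 : Matrix (Fin dS) (Fin dS) ℂ) i j * (∑ b, PE b) k k' by
        rw [Matrix.sum_apply, Finset.mul_sum]]
      rw [hPEsum]
      simp only [Matrix.one_apply, Prod.ext_iff, mul_ite, mul_one, mul_zero]
      by_cases h1 : i = j <;> by_cases h2 : k = k' <;> simp [h1, h2]
    have hC : ((∑ x : (Fin k₁ × Fin k₂) × Fin dE, pr x : ℝ) : ℂ) = 1 := by
      push_cast
      calc ∑ x : (Fin k₁ × Fin k₂) × Fin dE, ((pr x : ℝ) : ℂ)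
          = ∑ x : (Fin k₁ × Fin k₂) × Fin dE, star (φr x) ⬝ᵥ φr x :=
            Finset.sum_congr rfl fun x _ => (hdot x).symm
        _ = ∑ b : Fin k₁ × Fin k₂, ∑ m, star (φr (b, m)) ⬝ᵥ
              ((1 : Matrix (Fin dS) (Fin dS) ℂ) *ᵥ φr (b, m)) := by
            rw [Fintype.sum_prod_type]
            simp [Matrix.one_mulVec]
        _ = ∑ b : Fin k₁ × Fin k₂, star ψSE ⬝ᵥ
              (((1 : Matrix (Fin dS) (Fin dS) ℂ) ⊗ₖ PE b) *ᵥ ψSE) :=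
            Finset.sum_congr rfl fun b _ =>
              key_dot ψSE (1 : Matrix (Fin dS) (Fin dS) ℂ) (PE b) (Q b) (hQ b)
        _ = star ψSE ⬝ᵥ ((∑ b : Fin k₁ × Fin k₂,
              ((1 : Matrix (Fin dS) (Fin dS) ℂ) ⊗ₖ PE b)) *ᵥ ψSE) := by
            exact dot_sum_mulVec _ _ _
        _ = 1 := by rw [hone, Matrix.one_mulVec, hunit]
    exact_mod_cast hC
  -- now build the ensemble indexed by Fin L
  refine ⟨Fintype.card ((Fin k₁ × Fin k₂) × Fin dE),
    fun l => pr ((Fintype.equivFin _).symm l),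
    fun l => φn ((Fintype.equivFin _).symm l),
    fun l => hpr0 _, ?_, fun l => hnorm _, ?_, ?_⟩
  · rw [Equiv.sum_comp (Fintype.equivFin _).symm pr]
    exact hsum1
  · rw [Equiv.sum_comp (Fintype.equivFin _).symm
      (fun x => ((pr x : ℝ) : ℂ) • vecMulVec (φn x) (star (φn x)))]
    rw [← hρraw]
    refine Finset.sum_congr rfl fun x _ => ?_
    by_cases h : pr x = 0
    · rw [h, hzero x h]
      ext a b
      simp [vecMulVec_apply]
    · rw [hrecover x h, star_smul]
      have hcs : star (((Real.sqrt (pr x) : ℝ) : ℂ)) = ((Real.sqrt (pr x) : ℝ) : ℂ) :=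
        Complex.conj_ofReal _
      ext a b
      simp only [vecMulVec_apply, Pi.smul_apply, smul_eq_mul, Matrix.smul_apply,
        Pi.star_apply, hcs]
      rw [← hsq x]
      ring
  · -- the main inequality
    have hkey : ∀ b : Fin k₁ × Fin k₂,
        star ψSE ⬝ᵥ (((P1 b.1 * P2 b.2 * P1 b.1) ⊗ₖ PE b) *ᵥ ψSE)
          = ∑ m, star (φr (b, m)) ⬝ᵥ ((P1 b.1 * P2 b.2 * P1 b.1) *ᵥ φr (b, m)) :=
      fun b => (key_dot ψSE (P1 b.1 * P2 b.2 * P1 b.1) (PE b) (Q b) (hQ b)).symm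
    have hsc : ∀ x : (Fin k₁ × Fin k₂) × Fin dE,
        (star (φr x) ⬝ᵥ ((P1 x.1.1 * P2 x.1.2 * P1 x.1.1) *ᵥ φr x)).re
          = pr x * (star (φn x) ⬝ᵥ ((P1 x.1.1 * P2 x.1.2 * P1 x.1.1) *ᵥ φn x)).re := by
      intro x
      by_cases h : pr x = 0
      · rw [hzero x h, h]
        simp
      · have hcs : star (((Real.sqrt (pr x) : ℝ) : ℂ)) = ((Real.sqrt (pr x) : ℝ) : ℂ) :=
          Complex.conj_ofReal _
        rw [hrecover x h, star_smul, smul_dotProduct, mulVec_smul, dotProduct_smul, hcs]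
        simp only [smul_eq_mul]
        rw [← mul_assoc, hsq x, Complex.re_ofReal_mul]
    calc (∑ b : Fin k₁ × Fin k₂,
            star ψSE ⬝ᵥ (((P1 b.1 * P2 b.2 * P1 b.1) ⊗ₖ PE b) *ᵥ ψSE)).re
        = ∑ b : Fin k₁ × Fin k₂,
            (star ψSE ⬝ᵥ (((P1 b.1 * P2 b.2 * P1 b.1) ⊗ₖ PE b) *ᵥ ψSE)).re :=
          Complex.re_sum _ _
      _ = ∑ b : Fin k₁ × Fin k₂,
            (∑ m, star (φr (b, m)) ⬝ᵥ ((P1 b.1 * P2 b.2 * P1 b.1) *ᵥ φr (b, m))).re :=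
          Finset.sum_congr rfl fun b _ => by rw [hkey b]
      _ = ∑ b : Fin k₁ × Fin k₂, ∑ m,
            (star (φr (b, m)) ⬝ᵥ ((P1 b.1 * P2 b.2 * P1 b.1) *ᵥ φr (b, m))).re :=
          Finset.sum_congr rfl fun b _ => Complex.re_sum _ _
      _ = ∑ x : (Fin k₁ × Fin k₂) × Fin dE,
            (star (φr x) ⬝ᵥ ((P1 x.1.1 * P2 x.1.2 * P1 x.1.1) *ᵥ φr x)).re :=
          by
            conv_rhs => rw [Fintype.sum_prod_type]
      _ = ∑ x : (Fin k₁ × Fin k₂) × Fin dE,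
            pr x * (star (φn x) ⬝ᵥ ((P1 x.1.1 * P2 x.1.2 * P1 x.1.1) *ᵥ φn x)).re :=
          Finset.sum_congr rfl fun x _ => hsc x
      _ ≤ ∑ x : (Fin k₁ × Fin k₂) × Fin dE, pr x * Finset.univ.sup'
            (Finset.univ_nonempty_iff.mpr ⟨(⟨0, hk₁⟩, ⟨0, hk₂⟩)⟩)
            (fun b : Fin k₁ × Fin k₂ =>
              (star (φn x) ⬝ᵥ ((P1 b.1 * P2 b.2 * P1 b.1) *ᵥ φn x)).re) :=
          Finset.sum_le_sum fun x _ => mul_le_mul_of_nonneg_left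
            (Finset.le_sup' (fun b : Fin k₁ × Fin k₂ =>
              (star (φn x) ⬝ᵥ ((P1 b.1 * P2 b.2 * P1 b.1) *ᵥ φn x)).re)
              (Finset.mem_univ x.1)) (hpr0 x)
      _ = ∑ l, pr ((Fintype.equivFin _).symm l) * Finset.univ.sup'
            (Finset.univ_nonempty_iff.mpr ⟨(⟨0, hk₁⟩, ⟨0, hk₂⟩)⟩)
            (fun b : Fin k₁ × Fin k₂ =>
              (star (φn ((Fintype.equivFin _).symm l)) ⬝ᵥ
                ((P1 b.1 * P2 b.2 * P1 b.1) *ᵥ φn ((Fintype.equivFin _).symm l))).re) :=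
          (Equiv.sum_comp (Fintype.equivFin _).symm _).symm
end

section
/- For the maximally entangled two-qutrit state |ψ_MES⟩ = (|00⟩+|11⟩+|22⟩)/√3 and the CGLMP measurement bases |k⟩_{A_x} = (1/√3)Σ_{j=0}^{2} exp((2πi/3) j(k+α_x))|j⟩ with α₀=0, α₁=1/2, and |l⟩_{B_y} = (1/√3)Σ_{j=0}^{2} exp((2πi/3) j(−l+β_y))|j⟩ with β₀=1/4, β₁=−1/4, where Bob's measurement elements are the noisy operators E^l_{B_y} = ε|l⟩_{B_y}⟨l| + ((1−ε)/3)I₃, the CGLMP expression I₃ evaluates to (4/9)(3+2√3)ε. -/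
open Matrix Kronecker

noncomputable section

/-- Alice's CGLMP phases α₀ = 0, α₁ = 1/2. -/
def alphaA : Fin 2 → ℝ := ![0, 1/2]

/-- Bob's CGLMP phases β₀ = 1/4, β₁ = -1/4. -/
def betaB : Fin 2 → ℝ := ![1/4, -1/4]

/-- Alice's CGLMP basis vector |k⟩_{A_x}. -/
def ketA (x : Fin 2) (k : Fin 3) : Fin 3 → ℂ :=
  fun j => ((1 / Real.sqrt 3 : ℝ) : ℂ) *
    Complex.exp (2 * (Real.pi : ℂ) * Complex.I / 3 * (j.val : ℂ) *
      (((k.val : ℝ) + alphaA x : ℝ) : ℂ))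

/-- Bob's CGLMP basis vector |l⟩_{B_y}. -/
def ketB (y : Fin 2) (l : Fin 3) : Fin 3 → ℂ :=
  fun j => ((1 / Real.sqrt 3 : ℝ) : ℂ) *
    Complex.exp (2 * (Real.pi : ℂ) * Complex.I / 3 * (j.val : ℂ) *
      ((-(l.val : ℝ) + betaB y : ℝ) : ℂ))

/-- Bob's noisy measurement element E^l_{B_y} = ε|l⟩_{B_y}⟨l| + ((1-ε)/3)I₃. -/
def Emeas (ε : ℝ) (y : Fin 2) (l : Fin 3) : Matrix (Fin 3) (Fin 3) ℂ :=
  (ε : ℂ) • vecMulVec (ketB y l) (star (ketB y l)) +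
    (((1 - ε) / 3 : ℝ) : ℂ) • (1 : Matrix (Fin 3) (Fin 3) ℂ)

/-- The maximally entangled two-qutrit state (|00⟩+|11⟩+|22⟩)/√3. -/
def psiMES : Fin 3 × Fin 3 → ℂ :=
  fun q => if q.1 = q.2 then ((1 / Real.sqrt 3 : ℝ) : ℂ) else 0

/-- Joint outcome probability P(a,b|x,y) for the MES. -/
def Pab (ε : ℝ) (a b : Fin 3) (x y : Fin 2) : ℝ :=
  (star psiMES ⬝ᵥ ((vecMulVec (ketA x a) (star (ketA x a)) ⊗ₖ Emeas ε y b) *ᵥ psiMES)).re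

/-- P(A_x = B_y + k) = Σ_j P(a = j, b = (j - k) mod 3 | x, y). -/
def PS (ε : ℝ) (x y : Fin 2) (k : Fin 3) : ℝ := ∑ j : Fin 3, Pab ε j (j - k) x y

/-- P(B_y = A_x + k) = Σ_j P(a = (j - k) mod 3, b = j | x, y). -/
def PT (ε : ℝ) (x y : Fin 2) (k : Fin 3) : ℝ := ∑ j : Fin 3, Pab ε (j - k) j x y


def ee (t : ℝ) : ℂ := Complex.exp (t * Complex.I)

lemma ee_mul (s t : ℝ) : ee s * ee t = ee (s + t) := by
  rw [ee, ee, ee, ← Complex.exp_add, ← add_mul]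
  push_cast
  ring_nf

lemma ee_zero : ee 0 = 1 := by simp [ee]

lemma mul_ee_ee (z : ℂ) (s t : ℝ) : z * ee s * ee t = z * ee (s + t) := by
  rw [mul_assoc, ee_mul]

lemma mul_ee_mul_ee (z w : ℂ) (s t : ℝ) : z * ee s * w * ee t = z * w * ee (s + t) := by
  rw [← ee_mul]; ring

lemma ee_mul_mid (w : ℂ) (s t : ℝ) : ee s * w * ee t = w * ee (s + t) := by
  rw [← ee_mul]; ring

lemma star_ee (t : ℝ) : star (ee t) = ee (-t) := by
  simp [ee, ← Complex.exp_conj]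

lemma ee_eval (t : ℝ) : ee t = (Real.cos t : ℂ) + (Real.sin t : ℝ) * Complex.I := by
  simp [ee, Complex.exp_mul_I]

lemma ketA_eq (x : Fin 2) (k : Fin 3) (j : Fin 3) :
    ketA x k j = ((1 / Real.sqrt 3 : ℝ) : ℂ) *
      ee (((k.val : ℝ) + alphaA x) * j.val * (2 * Real.pi / 3)) := by
  unfold ketA ee
  congr 1
  · congr 1
    push_cast
    ring

lemma ketB_eq (y : Fin 2) (l : Fin 3) (j : Fin 3) :
    ketB y l j = ((1 / Real.sqrt 3 : ℝ) : ℂ) *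
      ee ((-(l.val : ℝ) + betaB y) * j.val * (2 * Real.pi / 3)) := by
  unfold ketB ee
  congr 1
  · congr 1
    push_cast
    ring

lemma Pab_cx (ε : ℝ) (a b : Fin 3) (x y : Fin 2) :
    star psiMES ⬝ᵥ ((vecMulVec (ketA x a) (star (ketA x a)) ⊗ₖ Emeas ε y b) *ᵥ psiMES)
      = (((1-ε)/9 : ℝ) : ℂ) + ((ε/27 : ℝ) : ℂ) *
        (3 + 2*ee (((a.val:ℝ) + alphaA x + (-(b.val:ℝ) + betaB y)) * (2*Real.pi/3))
           + 2*ee (-(((a.val:ℝ) + alphaA x + (-(b.val:ℝ) + betaB y)) * (2*Real.pi/3)))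
           + ee (((a.val:ℝ) + alphaA x + (-(b.val:ℝ) + betaB y)) * 2 * (2*Real.pi/3))
           + ee (-(((a.val:ℝ) + alphaA x + (-(b.val:ℝ) + betaB y)) * 2 * (2*Real.pi/3)))) := by
  simp only [dotProduct, mulVec, Fintype.sum_prod_type, Fin.sum_univ_three,
    kroneckerMap_apply, Emeas, Matrix.add_apply, Matrix.smul_apply, smul_eq_mul,
    vecMulVec_apply, Matrix.one_apply, psiMES, Pi.star_apply, ketA_eq, ketB_eq,
    star_mul', star_ee, Complex.conj_ofReal, RCLike.star_def]
  simp only [Fin.isValue, ite_true, ite_false, one_mul, mul_one, mul_zero, zero_mul,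
    add_zero, zero_add, if_true, if_false, reduceIte, Fin.val_zero, Fin.val_one,
    Fin.val_two, Nat.cast_zero, Nat.cast_one, Nat.cast_ofNat, CharP.cast_eq_zero,
    Fin.reduceEq, map_zero]
  have hc : ((1 / Real.sqrt 3 : ℝ) : ℂ) ^ 2 = (3 : ℂ)⁻¹ := by
    rw [← Complex.ofReal_pow]
    norm_num [Real.sq_sqrt]
  simp only [Complex.conj_ofReal]
  set c := ((1 / Real.sqrt 3 : ℝ) : ℂ) with hcdef
  have h4 : c ^ 4 = (9 : ℂ)⁻¹ := by rw [(by ring : c ^ 4 = (c ^ 2) ^ 2), hc]; norm_num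
  have h6 : c ^ 6 = (27 : ℂ)⁻¹ := by rw [(by ring : c ^ 6 = (c ^ 2) ^ 3), hc]; norm_num
  ring_nf
  simp only [ee_mul, mul_ee_ee, mul_ee_mul_ee, ee_mul_mid, ee_zero]
  ring_nf
  simp only [ee_mul, mul_ee_ee, mul_ee_mul_ee, ee_mul_mid, ee_zero]
  ring_nf
  rw [h4, h6]
  push_cast
  ring

/-- the CGLMP single-probability profile function -/
def fv (θ : ℝ) : ℝ :=
  3 + 4 * Real.cos (θ * (2 * Real.pi / 3)) + 2 * Real.cos (θ * 2 * (2 * Real.pi / 3))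

lemma Pab_re (ε : ℝ) (a b : Fin 3) (x y : Fin 2) :
    Pab ε a b x y = (1 - ε) / 9 +
      ε / 27 * fv ((a.val : ℝ) + alphaA x + (-(b.val : ℝ) + betaB y)) := by
  rw [Pab, Pab_cx, fv]
  simp only [ee_eval, Real.cos_neg, Real.sin_neg, Complex.add_re, Complex.mul_re,
    Complex.mul_im, Complex.add_im, Complex.ofReal_re, Complex.ofReal_im,
    Complex.I_re, Complex.I_im, Complex.re_ofNat, Complex.im_ofNat]
  ring

lemma fv_eq (θ θ' : ℝ) (h : θ = θ') : fv θ = fv θ' := by rw [h]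

lemma fv_q (θ : ℝ) : fv (-θ) = fv θ := by
  unfold fv
  rw [show -θ * (2 * Real.pi / 3) = -(θ * (2 * Real.pi / 3)) by ring,
    show -θ * 2 * (2 * Real.pi / 3) = -(θ * 2 * (2 * Real.pi / 3)) by ring,
    Real.cos_neg, Real.cos_neg]

lemma fv14 : fv (1/4) = 4 + 2 * Real.sqrt 3 := by
  unfold fv
  rw [show (1/4 : ℝ) * (2 * Real.pi / 3) = Real.pi / 6 by ring,
    show (1/4 : ℝ) * 2 * (2 * Real.pi / 3) = Real.pi / 3 by ring,
    Real.cos_pi_div_six, Real.cos_pi_div_three]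
  ring

lemma fv34 : fv (3/4) = 1 := by
  unfold fv
  rw [show (3/4 : ℝ) * (2 * Real.pi / 3) = Real.pi / 2 by ring,
    show (3/4 : ℝ) * 2 * (2 * Real.pi / 3) = Real.pi by ring,
    Real.cos_pi_div_two, Real.cos_pi]
  ring

lemma fv94 : fv (9/4) = 1 := by
  unfold fv
  rw [show (9/4 : ℝ) * (2 * Real.pi / 3) = 2 * Real.pi - Real.pi / 2 by ring,
    show (9/4 : ℝ) * 2 * (2 * Real.pi / 3) = Real.pi + 2 * Real.pi by ring,
    Real.cos_two_pi_sub, Real.cos_add_two_pi, Real.cos_pi_div_two, Real.cos_pi]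
  ring

lemma fv114 : fv (11/4) = 4 + 2 * Real.sqrt 3 := by
  unfold fv
  rw [show (11/4 : ℝ) * (2 * Real.pi / 3) = 2 * Real.pi - Real.pi / 6 by ring,
    show (11/4 : ℝ) * 2 * (2 * Real.pi / 3) = (2 * Real.pi - Real.pi / 3) + 2 * Real.pi by ring,
    Real.cos_two_pi_sub, Real.cos_add_two_pi, Real.cos_two_pi_sub,
    Real.cos_pi_div_six, Real.cos_pi_div_three]
  ring

/-- for the maximally entangled state with the CGLMP measurements
and Bob's noisy operators, the CGLMP expression evaluates to (4/9)(3+2√3)ε. -/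
theorem stmt9 (ε : ℝ) (hε0 : 0 ≤ ε) (hε1 : ε ≤ 1) :
    PS ε 0 0 0 + PT ε 1 0 1 + PS ε 1 1 0 + PT ε 0 1 0
      - PS ε 0 0 2 - PT ε 1 0 0 - PS ε 1 1 2 - PT ε 0 1 2
    = 4 / 9 * (3 + 2 * Real.sqrt 3) * ε := by
  simp only [PS, PT, Fin.sum_univ_three, Pab_re,
    show (0 - 2 : Fin 3) = 1 from rfl, show (1 - 2 : Fin 3) = 2 from rfl,
    show (2 - 2 : Fin 3) = 0 from rfl, show (0 - 1 : Fin 3) = 2 from rfl,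
    show (1 - 1 : Fin 3) = 0 from rfl, show (2 - 1 : Fin 3) = 1 from rfl,
    sub_zero]
  norm_num [alphaA, betaB]
  simp only [fv_q, fv14, fv34, fv94, fv114]
  ring


end
end
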